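/- Let (G, w) be a connected edge-weighted simple graph on vertices enumerated v_1, …, v_n. Then there exists a ℤ-module basis M_1, …, M_n of the spline module S_G such that M_1 is the constant function 1, and for each 2 ≤ i ≤ n: M_i(v_j) = 0 for all 1 ≤ j ≤ i − 1 and M_i(v_i) = L_i, where L_i = lcm_{1 ≤ j ≤ i−1} D(v_i, v_j) and D(v_i, v_j) is the lcm over all paths p from v_i to v_j of the gcd of the weights of the edges of p. In particular S_G is a free ℤ-module of rank n. -/

import Mathlib

/-- An integer spline on the edge-weighted graph `(G, w)`: a vertex labeling `g : V → ℤ` such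
that for every edge `{u, x}` of `G`, the weight `w {u, x}` divides `g u - g x` in `ℤ`. -/
def IsSpline {V : Type*} (G : SimpleGraph V) (w : Sym2 V → ℕ) (g : V → ℤ) : Prop :=
  ∀ u x : V, G.Adj u x → (w s(u, x) : ℤ) ∣ g u - g x

/-- The ℤ-module of integer splines on `(G, w)`, as a submodule of `V → ℤ`. -/
def splineSubmodule {V : Type*} (G : SimpleGraph V) (w : Sym2 V → ℕ) :
    Submodule ℤ (V → ℤ) where
  carrier := {g | IsSpline G w g}
  add_mem' := by
    intro a b ha hb u x hux
    simpa [sub_add_sub_comm] using dvd_add (ha u x hux) (hb u x hux)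
  zero_mem' := by intro u x hux; simp
  smul_mem' := by
    intro c g hg u x hux
    simpa [mul_sub] using (hg u x hux).mul_left c


/-- `D_G(u, x)`: the lcm, over all paths `p` from `u` to `x` in `G`, of the gcd of the weights
of the edges of `p` (the lcm of the empty set is `1`). -/
noncomputable def pathLcm {V : Type*} [Fintype V] [DecidableEq V] (G : SimpleGraph V)
    [DecidableRel G.Adj] (w : Sym2 V → ℕ) (u x : V) : ℕ :=
  Finset.univ.lcm (fun p : G.Path u x => (p.1.edges.map w).foldr Nat.gcd 0)

section FlowupAux

-- list helpers
lemma foldr_min_le_of_mem {l : List ℕ} {T a : ℕ} (h : a ∈ l) : l.foldr min T ≤ a := by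
  induction l with
  | nil => simp at h
  | cons b t ih =>
    rcases List.mem_cons.mp h with rfl | h
    · exact min_le_left _ _
    · exact le_trans (min_le_right _ _) (ih h)

lemma foldr_min_le_init (l : List ℕ) (T : ℕ) : l.foldr min T ≤ T := by
  induction l with
  | nil => simp
  | cons b t ih => exact le_trans (min_le_right _ _) ih

lemma le_foldr_min {l : List ℕ} {T b : ℕ} (hT : b ≤ T) (h : ∀ a ∈ l, b ≤ a) :
    b ≤ l.foldr min T := by
  induction l with
  | nil => simpa
  | cons c t ih =>
    exact le_min (h c (by simp)) (ih fun a ha => h a (List.mem_cons_of_mem _ ha))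

lemma dvd_foldr_gcd {l : List ℕ} {d : ℕ} (h : ∀ a ∈ l, d ∣ a) : d ∣ l.foldr Nat.gcd 0 := by
  induction l with
  | nil => simp
  | cons c t ih =>
    exact Nat.dvd_gcd (h c (by simp)) (ih fun a ha => h a (List.mem_cons_of_mem _ ha))

variable {n : ℕ} {G : SimpleGraph (Fin n)} [DecidableRel G.Adj] {w : Sym2 (Fin n) → ℕ}

lemma walk_gcd_dvd {g : Fin n → ℤ} (hg : IsSpline G w g) {u x : Fin n} (q : G.Walk u x) :
    (((q.edges.map w).foldr Nat.gcd 0 : ℕ) : ℤ) ∣ g u - g x := by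
  induction q with
  | nil => simp
  | @cons u b x h q ih =>
    rw [SimpleGraph.Walk.edges_cons, List.map_cons, List.foldr_cons]
    have h1 : ((Nat.gcd (w s(u, b)) ((q.edges.map w).foldr Nat.gcd 0) : ℕ) : ℤ) ∣ g u - g b :=
      dvd_trans (Int.natCast_dvd_natCast.mpr (Nat.gcd_dvd_left _ _)) (hg u b h)
    have h2 : ((Nat.gcd (w s(u, b)) ((q.edges.map w).foldr Nat.gcd 0) : ℕ) : ℤ) ∣ g b - g x :=
      dvd_trans (Int.natCast_dvd_natCast.mpr (Nat.gcd_dvd_right _ _)) ih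
    simpa [sub_add_sub_cancel] using dvd_add h1 h2

lemma pathLcm_dvd {g : Fin n → ℤ} (hg : IsSpline G w g) (u x : Fin n) :
    ((pathLcm G w u x : ℕ) : ℤ) ∣ g u - g x := by
  rw [Int.natCast_dvd]
  refine Finset.lcm_dvd fun p _ => ?_
  exact Int.natCast_dvd.mp (walk_gcd_dvd hg p.1)

noncomputable def Lep (G : SimpleGraph (Fin n)) [DecidableRel G.Adj] (w : Sym2 (Fin n) → ℕ)
    (i : Fin n) : ℕ :=
  (Finset.univ.filter (fun j : Fin n => j < i)).lcm (fun j => pathLcm G w i j)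

lemma L_dvd {g : Fin n → ℤ} (hg : IsSpline G w g) (i : Fin n)
    (h0 : ∀ j, j < i → g j = 0) : ((Lep G w i : ℕ) : ℤ) ∣ g i := by
  rw [Int.natCast_dvd]
  refine Finset.lcm_dvd fun j hj => ?_
  rw [← Int.natCast_dvd]
  have hji : j < i := (Finset.mem_filter.mp hj).2
  have := pathLcm_dvd hg i j
  rwa [h0 j hji, sub_zero] at this

lemma pathLcm_ne_zero (hw : ∀ e ∈ G.edgeSet, 0 < w e) {u x : Fin n} (hux : u ≠ x) :
    pathLcm G w u x ≠ 0 := by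
  rw [Ne, pathLcm, Finset.lcm_eq_zero_iff]
  rintro ⟨p, -, hp0⟩
  rcases p with ⟨q, hq⟩
  cases q with
  | nil => exact hux rfl
  | cons h r =>
    simp only [SimpleGraph.Walk.edges_cons, List.map_cons, List.foldr_cons] at hp0
    have h1 := (Nat.gcd_eq_zero_iff.mp hp0).1
    have h2 := hw _ (G.mem_edgeSet.mpr h)
    omega

lemma Lep_ne_zero (hw : ∀ e ∈ G.edgeSet, 0 < w e) (i : Fin n) : Lep G w i ≠ 0 := by
  rw [Ne, Lep, Finset.lcm_eq_zero_iff]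
  rintro ⟨j, hj, hj0⟩
  have hji : j < i := by
    simp only [Finset.coe_filter, Finset.mem_filter, Set.mem_setOf_eq, Finset.mem_coe] at hj
    exact hj.2
  exact pathLcm_ne_zero hw (ne_of_gt hji) hj0

section PrimePart
variable (G w) (p : ℕ) (i : Fin n)

/-- valuation of a weight -/
def vpw (e : Sym2 (Fin n)) : ℕ := (w e).factorization p

/-- cap, strictly bigger than any edge valuation -/
noncomputable def capT : ℕ := (G.edgeFinset.sup fun e => (w e).factorization p) + 1

/-- capped bottleneck of a walk -/
noncomputable def botl {u x : Fin n} (q : G.Walk u x) : ℕ :=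
  (q.edges.map (vpw w p)).foldr min (capT G w p)

/-- capped max-bottleneck connectivity to the vertices below `i` -/
noncomputable def cfun (u : Fin n) : ℕ :=
  Finset.univ.sup (fun q : Σ j : {j : Fin n // j < i}, G.Path u j.1 => botl G w p q.2.1)

variable {G w p i}

lemma botl_le_capT {u x : Fin n} (q : G.Walk u x) : botl G w p q ≤ capT G w p :=
  foldr_min_le_init _ _

lemma vpw_lt_capT {e : Sym2 (Fin n)} (he : e ∈ G.edgeSet) : vpw w p e < capT G w p :=
  Nat.lt_succ_of_le (Finset.le_sup (SimpleGraph.mem_edgeFinset.mpr he))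

lemma cfun_le_capT (u : Fin n) : cfun G w p i u ≤ capT G w p :=
  Finset.sup_le fun q _ => botl_le_capT _

lemma cfun_eq_capT {j : Fin n} (hj : j < i) : cfun G w p i j = capT G w p := by
  refine le_antisymm (cfun_le_capT j) ?_
  have : botl G w p (SimpleGraph.Path.nil : G.Path j j).1 = capT G w p := by
    simp [botl]
  calc capT G w p = _ := this.symm
    _ ≤ _ := Finset.le_sup (f := fun q : Σ j' : {j' : Fin n // j' < i}, G.Path j j'.1 =>
        botl G w p q.2.1) (Finset.mem_univ ⟨⟨j, hj⟩, SimpleGraph.Path.nil⟩)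

lemma sigma_nonempty (hG : G.Connected) (hi : 0 < (i : ℕ)) (u : Fin n) :
    Nonempty (Σ j : {j : Fin n // j < i}, G.Path u j.1) := by
  have hn0 : 0 < n := lt_of_le_of_lt (Nat.zero_le _) i.isLt
  have h0i : (⟨0, hn0⟩ : Fin n) < i := by
    simpa [Fin.lt_def] using hi
  have hr := hG.preconnected u ⟨0, hn0⟩
  exact ⟨⟨⟨⟨0, hn0⟩, h0i⟩, hr.some.toPath⟩⟩

/-- key exchange inequality along an edge -/
lemma cfun_key (hG : G.Connected) (hi : 0 < (i : ℕ)) {u x : Fin n} (hadj : G.Adj u x) :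
    min (vpw w p s(u, x)) (cfun G w p i x) ≤ cfun G w p i u := by
  have hne := sigma_nonempty (i := i) hG hi x
  obtain ⟨q0, -, hq0⟩ := Finset.exists_mem_eq_sup Finset.univ
    (Finset.univ_nonempty (α := Σ j : {j : Fin n // j < i}, G.Path x j.1))
    (fun q : Σ j : {j : Fin n // j < i}, G.Path x j.1 => botl G w p q.2.1)
  rw [cfun, hq0]
  by_cases hu : u ∈ q0.2.1.support
  · -- drop: a sub-path from u with bigger bottleneck
    have hdrop : botl G w p q0.2.1 ≤ botl G w p (q0.2.1.dropUntil u hu) := by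
      refine le_foldr_min (botl_le_capT _) ?_
      intro a ha
      rcases List.mem_map.mp ha with ⟨e, he, rfl⟩
      exact foldr_min_le_of_mem (List.mem_map_of_mem
        (SimpleGraph.Walk.edges_dropUntil_subset _ hu he))
    have hmem : botl G w p (q0.2.1.dropUntil u hu) ≤ cfun G w p i u :=
      Finset.le_sup (f := fun q : Σ j : {j : Fin n // j < i}, G.Path u j.1 => botl G w p q.2.1)
        (Finset.mem_univ ⟨q0.1, ⟨q0.2.1.dropUntil u hu, q0.2.2.dropUntil hu⟩⟩)
    exact le_trans (min_le_right _ _) (le_trans hdrop hmem)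
  · -- cons
    have hcons : botl G w p (SimpleGraph.Walk.cons hadj q0.2.1)
        = min (vpw w p s(u, x)) (botl G w p q0.2.1) := by
      simp [botl]
    have hmem : botl G w p (SimpleGraph.Walk.cons hadj q0.2.1) ≤ cfun G w p i u :=
      Finset.le_sup (f := fun q : Σ j : {j : Fin n // j < i}, G.Path u j.1 => botl G w p q.2.1)
        (Finset.mem_univ ⟨q0.1, ⟨SimpleGraph.Walk.cons hadj q0.2.1, q0.2.2.cons hu⟩⟩)
    rw [hcons] at hmem
    exact hmem

lemma botl_aux {u x : Fin n} {q : G.Walk u x} (hux : u ≠ x) :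
    botl G w p q < capT G w p ∧ p ^ (botl G w p q) ∣ (q.edges.map w).foldr Nat.gcd 0 := by
  cases q with
  | nil => exact absurd rfl hux
  | @cons _ b _ hadj r =>
    constructor
    · refine lt_of_le_of_lt ?_ (vpw_lt_capT (G.mem_edgeSet.mpr hadj))
      refine foldr_min_le_of_mem ?_
      simp [SimpleGraph.Walk.edges_cons]
    · refine dvd_foldr_gcd ?_
      intro a ha
      rcases List.mem_map.mp ha with ⟨e, he, rfl⟩
      have hle : botl G w p (SimpleGraph.Walk.cons hadj r) ≤ vpw w p e :=
        foldr_min_le_of_mem (List.mem_map_of_mem he)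
      exact dvd_trans (pow_dvd_pow p hle) (Nat.ordProj_dvd _ _)

lemma cfun_i_lt (hG : G.Connected) (hi : 0 < (i : ℕ)) (hw : ∀ e ∈ G.edgeSet, 0 < w e)
    (hp : p.Prime) :
    cfun G w p i i < capT G w p ∧ cfun G w p i i ≤ (Lep G w i).factorization p := by
  have hne := sigma_nonempty (i := i) hG hi i
  obtain ⟨q0, -, hq0⟩ := Finset.exists_mem_eq_sup Finset.univ
    (Finset.univ_nonempty (α := Σ j : {j : Fin n // j < i}, G.Path i j.1))
    (fun q : Σ j : {j : Fin n // j < i}, G.Path i j.1 => botl G w p q.2.1)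
  rw [cfun, hq0]
  have hne' : i ≠ (q0.1 : Fin n) := ne_of_gt q0.1.2
  obtain ⟨hlt, hdvd⟩ := botl_aux (q := q0.2.1) hne'
  refine ⟨hlt, ?_⟩
  have h2 : (q0.2.1.edges.map w).foldr Nat.gcd 0 ∣ pathLcm G w i q0.1 :=
    Finset.dvd_lcm (f := fun pth : G.Path i (q0.1 : Fin n) =>
      (pth.1.edges.map w).foldr Nat.gcd 0) (Finset.mem_univ q0.2)
  have h3 : pathLcm G w i q0.1 ∣ Lep G w i :=
    Finset.dvd_lcm (Finset.mem_filter.mpr ⟨Finset.mem_univ _, q0.1.2⟩)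
  exact (hp.pow_dvd_iff_le_factorization (Lep_ne_zero hw i)).mp
    (hdvd.trans (h2.trans h3))

end PrimePart

lemma mem_splineSubmodule {g : Fin n → ℤ} : g ∈ splineSubmodule G w ↔ IsSpline G w g :=
  Iff.rfl

lemma exists_prime_flowup (hG : G.Connected) (hw : ∀ e ∈ G.edgeSet, 0 < w e)
    (i : Fin n) (hi : 0 < (i : ℕ)) {p : ℕ} (hp : p.Prime) :
    ∃ (g : Fin n → ℤ) (k : ℕ), IsSpline G w g ∧ (∀ j, j < i → g j = 0) ∧
      ¬ ((p : ℤ) ^ (k + 1) ∣ g i) ∧ k ≤ (Lep G w i).factorization p := by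
  classical
  set W : ℕ := ∏ e ∈ G.edgeFinset, w e with hW
  have hW0 : W ≠ 0 := by
    rw [hW, Finset.prod_ne_zero_iff]
    intro e he
    have := hw e (SimpleGraph.mem_edgeFinset.mp he)
    omega
  set Cp : ℕ := ordCompl[p] W with hCp
  have hCp0 : Cp ≠ 0 := by
    have := Nat.ordCompl_pos p hW0
    omega
  have hpCp : ¬ p ∣ Cp := Nat.not_dvd_ordCompl hp hW0
  set T : ℕ := capT G w p with hT
  set c : Fin n → ℕ := cfun G w p i with hc
  set g : Fin n → ℤ := fun u => (Cp : ℤ) * ((p : ℤ) ^ (c u) - (p : ℤ) ^ T) with hg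
  have hgsub : ∀ u x : Fin n, g u - g x = (Cp : ℤ) * ((p : ℤ) ^ (c u) - (p : ℤ) ^ (c x)) := by
    intro u x; rw [hg]; ring
  have hspline : IsSpline G w g := by
    intro u x hadj
    rw [hgsub]
    have hsplit : (w s(u, x) : ℤ)
        = (p : ℤ) ^ (vpw w p s(u, x)) * ((ordCompl[p] (w s(u, x)) : ℕ) : ℤ) := by
      rw [vpw, ← Nat.cast_pow, ← Nat.cast_mul, Nat.ordProj_mul_ordCompl_eq_self]
    have hdvd2 : ((ordCompl[p] (w s(u, x)) : ℕ) : ℤ) ∣ (Cp : ℤ) := by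
      exact_mod_cast Nat.ordCompl_dvd_ordCompl_of_dvd
        (Finset.dvd_prod_of_mem w (SimpleGraph.mem_edgeFinset.mpr hadj)) p
    have h1 := cfun_key (w := w) (p := p) (i := i) hG hi hadj
    have h2 := cfun_key (w := w) (p := p) (i := i) hG hi hadj.symm
    rw [Sym2.eq_swap] at h2
    rw [← hc] at h1 h2
    have hdvd1 : (p : ℤ) ^ (vpw w p s(u, x)) ∣ (p : ℤ) ^ (c u) - (p : ℤ) ^ (c x) := by
      rcases lt_trichotomy (c u) (c x) with h | h | h
      · have hv : vpw w p s(u, x) ≤ c u := by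
          rcases min_cases (vpw w p s(u, x)) (c x) with ⟨he, hle⟩ | ⟨he, hle⟩ <;>
            rw [he] at h1 <;> omega
        exact dvd_trans (pow_dvd_pow _ hv) (dvd_sub dvd_rfl (pow_dvd_pow _ h.le))
      · rw [h, sub_self]; exact dvd_zero _
      · have hv : vpw w p s(u, x) ≤ c x := by
          rcases min_cases (vpw w p s(u, x)) (c u) with ⟨he, hle⟩ | ⟨he, hle⟩ <;>
            rw [he] at h2 <;> omega
        exact dvd_trans (pow_dvd_pow _ hv) (dvd_sub (pow_dvd_pow _ h.le) dvd_rfl)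
    calc (w s(u, x) : ℤ) = (p : ℤ) ^ (vpw w p s(u, x)) * ((ordCompl[p] (w s(u, x)) : ℕ) : ℤ) :=
          hsplit
      _ ∣ ((p : ℤ) ^ (c u) - (p : ℤ) ^ (c x)) * (Cp : ℤ) := mul_dvd_mul hdvd1 hdvd2
      _ = (Cp : ℤ) * ((p : ℤ) ^ (c u) - (p : ℤ) ^ (c x)) := mul_comm _ _
  have hvanish : ∀ j, j < i → g j = 0 := by
    intro j hj
    rw [hg]
    simp only [hc, cfun_eq_capT hj, ← hT, sub_self, mul_zero]
  obtain ⟨hciT, hcifact⟩ := cfun_i_lt (i := i) hG hi hw hp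
  rw [← hc, ← hT] at hciT
  rw [← hc] at hcifact
  refine ⟨g, c i, hspline, hvanish, ?_, hcifact⟩
  -- g i = p^(c i) * (Cp * (1 - p^(T - c i)))
  have hTi : c i + (T - c i) = T := by omega
  have hpT : (p : ℤ) ^ T = (p : ℤ) ^ (c i) * (p : ℤ) ^ (T - c i) := by
    rw [← pow_add, hTi]
  have hgi : g i = (p : ℤ) ^ (c i) * ((Cp : ℤ) * (1 - (p : ℤ) ^ (T - c i))) := by
    simp only [hg]
    rw [hpT]
    ring
  intro hdvd
  rw [hgi, pow_succ, mul_comm ((p:ℤ) ^ (c i)) (p : ℤ)] at hdvd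
  rw [mul_comm ((p:ℤ)) ((p:ℤ) ^ (c i))] at hdvd
  have hpne : ((p : ℤ)) ^ (c i) ≠ 0 := pow_ne_zero _ (by exact_mod_cast hp.ne_zero)
  have hdvd' : (p : ℤ) ∣ (Cp : ℤ) * (1 - (p : ℤ) ^ (T - c i)) :=
    (mul_dvd_mul_iff_left hpne).mp hdvd
  have hprime : Prime ((p : ℕ) : ℤ) := Nat.prime_iff_prime_int.mp hp
  rcases hprime.dvd_mul.mp hdvd' with hd | hd
  · exact hpCp (Int.natCast_dvd_natCast.mp hd)
  · have hm : 1 ≤ T - c i := by omega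
    have : (p : ℤ) ∣ 1 := by
      have h3 : (p : ℤ) ∣ (p : ℤ) ^ (T - c i) := dvd_pow_self _ (by omega)
      have := dvd_add hd h3
      simpa using this
    exact hprime.not_unit (isUnit_of_dvd_one this)

lemma exists_flowup (hG : G.Connected) (hw : ∀ e ∈ G.edgeSet, 0 < w e)
    (i : Fin n) (hi : 0 < (i : ℕ)) :
    ∃ g : Fin n → ℤ, IsSpline G w g ∧ (∀ j, j < i → g j = 0) ∧ g i = (Lep G w i : ℤ) := by
  classical
  set K : Submodule ℤ (Fin n → ℤ) :=
    splineSubmodule G w ⊓ ⨅ (j : Fin n) (_ : j < i),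
      LinearMap.ker (LinearMap.proj (R := ℤ) (φ := fun _ : Fin n => ℤ) j) with hK
  have hKmem : ∀ h : Fin n → ℤ, h ∈ K ↔ IsSpline G w h ∧ ∀ j, j < i → h j = 0 := by
    intro h
    rw [hK, Submodule.mem_inf]
    simp only [Submodule.mem_iInf, LinearMap.mem_ker, LinearMap.proj_apply]
    exact Iff.rfl
  set I : Ideal ℤ := K.map (LinearMap.proj (R := ℤ) (φ := fun _ : Fin n => ℤ) i) with hI
  have hImem : ∀ a : ℤ, a ∈ I ↔ ∃ h : Fin n → ℤ,
      (IsSpline G w h ∧ ∀ j, j < i → h j = 0) ∧ h i = a := by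
    intro a
    rw [hI, Submodule.mem_map]
    constructor
    · rintro ⟨h, hh, rfl⟩; exact ⟨h, (hKmem h).mp hh, rfl⟩
    · rintro ⟨h, hh, rfl⟩; exact ⟨h, (hKmem h).mpr hh, rfl⟩
  set d : ℤ := Submodule.IsPrincipal.generator I with hd
  have hdvd_of_mem : ∀ a : ℤ, a ∈ I → d ∣ a := fun a ha =>
    (Submodule.IsPrincipal.mem_iff_generator_dvd I).mp ha
  -- d ≠ 0
  obtain ⟨g2, k2, hg2s, hg2v, hg2nd, -⟩ := exists_prime_flowup hG hw i hi Nat.prime_two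
  have hg2I : g2 i ∈ I := (hImem _).mpr ⟨g2, ⟨hg2s, hg2v⟩, rfl⟩
  have hg2ne : g2 i ≠ 0 := fun h => hg2nd (h ▸ dvd_zero _)
  have hd0 : d ≠ 0 := by
    intro h
    rcases hdvd_of_mem _ hg2I with ⟨e, he⟩
    rw [h, zero_mul] at he
    exact hg2ne he
  -- d.natAbs ∣ Lep G w i
  have hdL : d.natAbs ∣ Lep G w i := by
    rw [← Nat.factorization_le_iff_dvd (Int.natAbs_ne_zero.mpr hd0) (Lep_ne_zero hw i),
      Finsupp.le_def]
    intro p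
    by_cases hp : p.Prime
    · obtain ⟨g, k, hgs, hgv, hgnd, hkL⟩ := exists_prime_flowup hG hw i hi hp
      have hgI : g i ∈ I := (hImem _).mpr ⟨g, ⟨hgs, hgv⟩, rfl⟩
      have hda : d.natAbs ∣ (g i).natAbs := Int.natAbs_dvd_natAbs.mpr (hdvd_of_mem _ hgI)
      refine le_trans ?_ hkL
      by_contra hgt
      push_neg at hgt
      have h1 : p ^ (k + 1) ∣ d.natAbs :=
        dvd_trans (pow_dvd_pow p hgt) (Nat.ordProj_dvd _ _)
      have h2 : p ^ (k + 1) ∣ (g i).natAbs := h1.trans hda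
      have h3 : ((p : ℤ)) ^ (k + 1) ∣ g i := by
        have := Int.natCast_dvd.mpr h2
        push_cast at this
        exact this
      exact hgnd h3
    · simp [Nat.factorization_eq_zero_of_not_prime _ hp]
  have hLI : ((Lep G w i : ℕ) : ℤ) ∈ I := by
    refine (Submodule.IsPrincipal.mem_iff_generator_dvd I).mpr ?_
    exact dvd_trans (Int.dvd_natAbs.mpr dvd_rfl) (Int.natCast_dvd_natCast.mpr hdL)
  obtain ⟨g, hgK, hgi⟩ := (hImem _).mp hLI
  exact ⟨g, hgK.1, hgK.2, hgi⟩

end FlowupAux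

/-- A connected edge-weighted graph `(G, w)` on vertices `v_1, …, v_n` (enumerated as `Fin n`)
has a ℤ-module basis `M_1, …, M_n` of the spline module `S_G` with `M_1` the constant function
`1`, and, for `2 ≤ i ≤ n`, `M_i v_j = 0` for `j < i` and `M_i v_i = L_i`, where
`L_i = lcm_{1 ≤ j ≤ i-1} D(v_i, v_j)`.  In particular `S_G` is free of rank `n`. -/
theorem flowup_basis_exists (n : ℕ) (hn : 1 ≤ n) (G : SimpleGraph (Fin n))
    [DecidableRel G.Adj] (hG : G.Connected) (w : Sym2 (Fin n) → ℕ)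
    (hw : ∀ e ∈ G.edgeSet, 0 < w e) :
    ∃ b : Module.Basis (Fin n) ℤ (splineSubmodule G w),
      ((b ⟨0, by omega⟩ : Fin n → ℤ) = fun _ => 1) ∧
      ∀ i : Fin n, 0 < (i : ℕ) →
        (∀ j : Fin n, j < i → (b i : Fin n → ℤ) j = 0) ∧
        (b i : Fin n → ℤ) i =
          ((Finset.univ.filter (fun j : Fin n => j < i)).lcm (fun j => pathLcm G w i j) : ℕ) := by
  classical
  have hMex : ∀ i : Fin n, ∃ g : Fin n → ℤ, IsSpline G w g ∧
      ((i : ℕ) = 0 → g = fun _ => 1) ∧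
      (0 < (i : ℕ) → (∀ j, j < i → g j = 0) ∧ g i = (Lep G w i : ℤ)) := by
    intro i
    rcases Nat.eq_zero_or_pos (i : ℕ) with h0 | hpos
    · refine ⟨fun _ => 1, ?_, fun _ => rfl, fun h => absurd h (by omega)⟩
      intro u x hux; simp
    · obtain ⟨g, h1, h2, h3⟩ := exists_flowup hG hw i hpos
      exact ⟨g, h1, fun h => absurd h (by omega), fun _ => ⟨h2, h3⟩⟩
  choose M hM1 hM2 hM3 using hMex
  have hMij : ∀ i j : Fin n, j < i → M i j = 0 := by
    intro i j hj
    have hpos : 0 < (i : ℕ) := lt_of_le_of_lt (Nat.zero_le _) (Fin.lt_def.mp hj)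
    exact (hM3 i hpos).1 j hj
  have hMii : ∀ i : Fin n, 0 < (i : ℕ) → M i i = (Lep G w i : ℤ) := fun i h => (hM3 i h).2
  have hdiag : ∀ i : Fin n, M i i ≠ 0 := by
    intro i
    rcases Nat.eq_zero_or_pos (i : ℕ) with h0 | hpos
    · rw [hM2 i h0]; norm_num
    · rw [hMii i hpos]
      exact_mod_cast Lep_ne_zero hw i
  have hLI : LinearIndependent ℤ M := by
    rw [Fintype.linearIndependent_iff]
    intro cc hsum
    have key : ∀ m : ℕ, ∀ k : Fin n, (k : ℕ) = m → cc k = 0 := by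
      intro m
      induction m using Nat.strong_induction_on with
      | _ m IH =>
        intro k hk
        have hev : ∑ j : Fin n, cc j * M j k = 0 := by
          have := congrFun hsum k
          simpa using this
        have hsingle : ∑ j : Fin n, cc j * M j k = cc k * M k k := by
          refine Finset.sum_eq_single k ?_ ?_
          · intro j _ hjk
            rcases lt_or_gt_of_ne hjk with h | h
            · have hjm : (j : ℕ) < m := by
                have := Fin.lt_def.mp h; omega
              rw [IH (j : ℕ) hjm j rfl, zero_mul]
            · rw [hMij j k h, mul_zero]
          · intro h; exact absurd (Finset.mem_univ k) h
        rw [hsingle] at hev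
        exact (mul_eq_zero.mp hev).resolve_right (hdiag k)
    intro k; exact key (k : ℕ) k rfl
  have hspan : ∀ m : ℕ, ∀ g : Fin n → ℤ, IsSpline G w g →
      (∀ j : Fin n, (j : ℕ) < n - m → g j = 0) → ∃ c : Fin n → ℤ, g = ∑ j, c j • M j := by
    intro m
    induction m with
    | zero =>
      intro g hg h0
      refine ⟨0, ?_⟩
      funext u
      rw [h0 u (by omega)]
      simp
    | succ m ih =>
      intro g hg h0
      by_cases hm : n ≤ m
      · exact ih g hg (fun j hj => h0 j (by omega))
      · set k : ℕ := n - (m + 1) with hkdef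
        have hkn : k < n := by omega
        set kF : Fin n := ⟨k, hkn⟩ with hkF
        have hvanishlt : ∀ j : Fin n, j < kF → g j = 0 := by
          intro j hj
          exact h0 j (by simpa [hkF, Fin.lt_def] using hj)
        obtain ⟨c0, hc0⟩ : ∃ c0 : ℤ, g kF - c0 * M kF kF = 0 := by
          rcases Nat.eq_zero_or_pos (kF : ℕ) with h0k | hposk
          · refine ⟨g kF, ?_⟩
            rw [hM2 kF h0k]
            simp
          · have hdl : ((Lep G w kF : ℕ) : ℤ) ∣ g kF := L_dvd hg kF hvanishlt
            refine ⟨g kF / (Lep G w kF : ℤ), ?_⟩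
            rw [hMii kF hposk, Int.ediv_mul_cancel hdl, sub_self]
        set g' : Fin n → ℤ := g - c0 • M kF with hg'
        have hg's : IsSpline G w g' :=
          Submodule.sub_mem (splineSubmodule G w) hg
            (Submodule.smul_mem _ c0 (hM1 kF))
        have h0' : ∀ j : Fin n, (j : ℕ) < n - m → g' j = 0 := by
          intro j hj
          have hnm : n - m = k + 1 := by omega
          simp only [hg', Pi.sub_apply, Pi.smul_apply, smul_eq_mul]
          rcases Nat.lt_or_ge (j : ℕ) k with hlt | hge
          · rw [h0 j (by omega), hMij kF j (by simpa [hkF, Fin.lt_def] using hlt),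
              mul_zero, sub_zero]
          · have hjk : j = kF := by
              apply Fin.ext
              simp only [hkF]
              omega
            rw [hjk]
            exact hc0
        obtain ⟨c', hc'⟩ := ih g' hg's h0'
        refine ⟨fun j => c' j + if j = kF then c0 else 0, ?_⟩
        have hgdecomp : g = g' + c0 • M kF := by
          rw [hg']; abel
        rw [hgdecomp, hc']
        rw [show (∑ j, (c' j + if j = kF then c0 else 0) • M j)
            = (∑ j, c' j • M j) + ∑ j, (if j = kF then c0 else 0) • M j by
          rw [← Finset.sum_add_distrib]
          exact Finset.sum_congr rfl fun j _ => (add_smul _ _ _)]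
        congr 1
        rw [show (∑ j, (if j = kF then c0 else 0) • M j)
            = ∑ j, (if j = kF then c0 • M j else 0) by
          exact Finset.sum_congr rfl fun j _ => by split <;> simp]
        rw [Finset.sum_ite_eq' Finset.univ kF (fun j => c0 • M j)]
        simp
  set MS : Fin n → (splineSubmodule G w) := fun i => ⟨M i, hM1 i⟩ with hMS
  have hLIS : LinearIndependent ℤ MS := by
    apply LinearIndependent.of_comp (splineSubmodule G w).subtype
    have : (splineSubmodule G w).subtype ∘ MS = M := rfl
    rw [this]
    exact hLI
  have hspanS : ⊤ ≤ Submodule.span ℤ (Set.range MS) := by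
    rintro ⟨g, hg⟩ -
    obtain ⟨c, hc⟩ := hspan n g hg (fun j hj => absurd hj (by omega))
    have heq : (⟨g, hg⟩ : splineSubmodule G w) = ∑ j, c j • MS j := by
      apply Subtype.ext
      show g = ((∑ j, c j • MS j : splineSubmodule G w) : Fin n → ℤ)
      rw [hc]
      simp [hMS, AddSubmonoidClass.coe_finset_sum]
    rw [heq]
    exact Submodule.sum_mem _ fun j _ =>
      Submodule.smul_mem _ _ (Submodule.subset_span ⟨j, rfl⟩)
  refine ⟨Module.Basis.mk hLIS hspanS, ?_, ?_⟩
  · rw [Module.Basis.mk_apply]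
    exact hM2 _ rfl
  · intro i hi
    rw [Module.Basis.mk_apply]
    exact ⟨fun j hj => (hM3 i hi).1 j hj, (hM3 i hi).2⟩
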